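/- For a ring R and any set {x_α} of commuting indeterminates, the polynomial ring R[{x_α}] is right Central McCoy if and only if R is right Central McCoy. -/

import Mathlib

/-- A ring `R` is *right Central McCoy* if whenever nonzero polynomials
`f, g ∈ R[x]` satisfy `f * g = 0`, there is a nonzero `r ∈ R` with
every coefficient of `f` times `r` central in `R`. -/
def IsRightCentralMcCoy (R : Type*) [Ring R] : Prop :=
  ∀ f g : Polynomial R, f ≠ 0 → g ≠ 0 → f * g = 0 →
    ∃ r : R, r ≠ 0 ∧ ∀ i : ℕ, f.coeff i * r ∈ Set.center R

section Aux

/-- Center membership in a ring via commutation. -/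
lemma ring_mem_center_iff {A : Type*} [Ring A] {z : A} :
    z ∈ Set.center A ↔ ∀ g : A, g * z = z * g := by
  rw [← Subring.coe_center, SetLike.mem_coe]
  exact Subring.mem_center_iff

variable {R : Type*} [Ring R] {M : Type*} [AddCommMonoid M]

/-- A single with central coefficient is central in the monoid algebra. -/
lemma single_mem_center_of_center (d : M) {r : R} (hr : r ∈ Set.center R) :
    (AddMonoidAlgebra.single d r : AddMonoidAlgebra R M) ∈ Set.center (AddMonoidAlgebra R M) := by
  refine ring_mem_center_iff.mpr fun g => ?_
  induction g using AddMonoidAlgebra.induction_linear with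
  | zero => simp
  | add p q hp hq => rw [add_mul, mul_add, hp, hq]
  | single b s =>
      exact ((AddMonoidAlgebra.single_mul_single ..).trans
        (by rw [add_comm b d, ring_mem_center_iff.mp hr s])).trans
        (AddMonoidAlgebra.single_mul_single ..).symm

/-- An element of the monoid algebra, all of whose coefficients are central,
is central. -/
lemma mem_center_of_coeffs_center (z : AddMonoidAlgebra R M)
    (h : ∀ a : M, z.coeff a ∈ Set.center R) : z ∈ Set.center (AddMonoidAlgebra R M) := by
  refine ring_mem_center_iff.mpr fun g => ?_
  conv_lhs => rw [← AddMonoidAlgebra.sum_coeff_single z]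
  conv_rhs => rw [← AddMonoidAlgebra.sum_coeff_single z]
  rw [Finsupp.mul_sum, Finsupp.sum_mul]
  exact Finsupp.sum_congr fun d _ =>
    ring_mem_center_iff.mp (single_mem_center_of_center d (h d)) g

/-- Uniqueness of base-`B` digits. -/
lemma digits_inj {B : ℕ} : ∀ (n : ℕ) (a b : ℕ → ℕ), (∀ i, i < n → a i < B) →
    (∀ i, i < n → b i < B) →
    (∑ i ∈ Finset.range n, a i * B ^ i) = (∑ i ∈ Finset.range n, b i * B ^ i) →
    ∀ i, i < n → a i = b i := by
  intro n
  induction n with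
  | zero => intro _ _ _ _ _ i hi; omega
  | succ n ih =>
    intro a b ha hb hsum i hi
    have hB : 0 < B := lt_of_le_of_lt (Nat.zero_le _) (ha 0 (Nat.succ_pos n))
    rw [Finset.sum_range_succ', Finset.sum_range_succ'] at hsum
    have e1 : ∀ c : ℕ → ℕ, (∑ i ∈ Finset.range n, c (i + 1) * B ^ (i + 1))
        = B * ∑ i ∈ Finset.range n, c (i + 1) * B ^ i := by
      intro c; rw [Finset.mul_sum]; exact Finset.sum_congr rfl fun j _ => by ring
    rw [e1 a, e1 b] at hsum
    simp only [pow_zero, mul_one] at hsum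
    have h0 : a 0 = b 0 := by
      have h := congrArg (fun t => t % B) hsum
      simp only [Nat.mul_add_mod] at h
      rwa [Nat.mod_eq_of_lt (ha 0 (Nat.succ_pos n)), Nat.mod_eq_of_lt (hb 0 (Nat.succ_pos n))] at h
    have hrest : (∑ i ∈ Finset.range n, a (i + 1) * B ^ i)
        = ∑ i ∈ Finset.range n, b (i + 1) * B ^ i := by
      rw [h0] at hsum
      exact Nat.eq_of_mul_eq_mul_left hB (Nat.add_right_cancel hsum)
    rcases Nat.eq_zero_or_pos i with rfl | hpos
    · exact h0
    · obtain ⟨j, rfl⟩ := Nat.exists_eq_add_of_lt hpos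
      simp only [Nat.zero_add]
      exact ih (fun k => a (k + 1)) (fun k => b (k + 1))
        (fun k hk => ha (k + 1) (by omega)) (fun k hk => hb (k + 1) (by omega)) hrest j (by omega)

/-- Kronecker substitution: an additive monoid hom `(σ →₀ ℕ) →+ ℕ` injective on any
given finite set. -/
lemma exists_addHom_injOn {σ : Type*} (D : Finset (σ →₀ ℕ)) :
    ∃ φ : (σ →₀ ℕ) →+ ℕ, Set.InjOn φ (D : Set (σ →₀ ℕ)) := by
  classical
  set V : Finset σ := D.sup Finsupp.support with hVdef
  set B : ℕ := (D.sup fun d => d.support.sup d) + 1 with hBdef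
  have hBpos : 0 < B := Nat.succ_pos _
  have hdB : ∀ d ∈ D, ∀ s, d s < B := by
    intro d hd s
    by_cases hs : s ∈ d.support
    · calc d s ≤ d.support.sup d := Finset.le_sup hs
        _ ≤ D.sup fun d => d.support.sup d := Finset.le_sup (f := fun d => d.support.sup d) hd
        _ < B := Nat.lt_succ_self _
    · rw [Finsupp.notMem_support_iff.mp hs]; exact hBpos
  have hsupp : ∀ d ∈ D, d.support ⊆ V := fun d hd => Finset.le_sup hd
  set n := V.card with hndef
  set e : {x // x ∈ V} ≃ Fin n := V.equivFin with hedef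
  set w : σ → ℕ := fun s => if h : s ∈ V then B ^ ((e ⟨s, h⟩ : Fin n) : ℕ) else 0 with hwdef
  refine ⟨Finsupp.liftAddHom fun s => AddMonoidHom.mulRight (w s), ?_⟩
  set φ : (σ →₀ ℕ) →+ ℕ := Finsupp.liftAddHom fun s => AddMonoidHom.mulRight (w s) with hφdef
  set a : (σ →₀ ℕ) → ℕ → ℕ :=
    fun d i => if h : i < n then d ((e.symm ⟨i, h⟩ : {x // x ∈ V}) : σ) else 0 with hadef
  have hφsum : ∀ d ∈ D, φ d = ∑ i ∈ Finset.range n, a d i * B ^ i := by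
    intro d hd
    have h1 : φ d = ∑ s ∈ d.support, d s * w s := by
      rw [hφdef, Finsupp.liftAddHom_apply]
      rfl
    rw [h1, Finset.sum_subset (hsupp d hd) (fun s _ hs => by
      rw [Finsupp.notMem_support_iff.mp hs, zero_mul])]
    rw [← Finset.sum_attach V (fun s => d s * w s), ← Finset.univ_eq_attach,
      ← Equiv.sum_comp e.symm (fun x : {x // x ∈ V} => d x * w x),
      ← Fin.sum_univ_eq_sum_range (fun i => a d i * B ^ i) n]
    refine Finset.sum_congr rfl fun i _ => ?_
    have hi : (i : ℕ) < n := i.isLt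
    have hmem : ((e.symm i : {x // x ∈ V}) : σ) ∈ V := (e.symm i).2
    have h2 : a d (i : ℕ) = d ((e.symm i : {x // x ∈ V}) : σ) := by
      rw [hadef]
      dsimp only
      rw [dif_pos hi]
    have h3 : w ((e.symm i : {x // x ∈ V}) : σ) = B ^ (i : ℕ) := by
      rw [hwdef]
      dsimp only
      rw [dif_pos hmem]
      congr 2
      have hsub : (⟨((e.symm i : {x // x ∈ V}) : σ), hmem⟩ : {x // x ∈ V}) = e.symm i :=
        Subtype.ext rfl
      rw [hsub, Equiv.apply_symm_apply]
    rw [h2, h3]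
  intro d hd d' hd' heq
  have hd₀ := Finset.mem_coe.mp hd
  have hd'₀ := Finset.mem_coe.mp hd'
  have hdig : ∀ i, i < n → a d i = a d' i := by
    apply digits_inj n (a d) (a d')
    · intro i hi
      rw [hadef]; simp only [dif_pos hi]; exact hdB d hd₀ _
    · intro i hi
      rw [hadef]; simp only [dif_pos hi]; exact hdB d' hd'₀ _
    · rw [← hφsum d hd₀, ← hφsum d' hd'₀]; exact heq
  ext s
  by_cases hs : s ∈ V
  · have hk := hdig ((e ⟨s, hs⟩ : Fin n) : ℕ) (e ⟨s, hs⟩).isLt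
    rw [hadef] at hk
    simp only [dif_pos (e ⟨s, hs⟩).isLt] at hk
    have hback : (e.symm ⟨((e ⟨s, hs⟩ : Fin n) : ℕ), (e ⟨s, hs⟩).isLt⟩ : {x // x ∈ V})
        = ⟨s, hs⟩ := by
      rw [Fin.eta]; exact Equiv.symm_apply_apply e _
    rw [hback] at hk
    exact hk
  · rw [Finsupp.notMem_support_iff.mp (fun h => hs (hsupp d hd₀ h)),
      Finsupp.notMem_support_iff.mp (fun h => hs (hsupp d' hd'₀ h))]

end Aux

/-- For any set `σ` of commuting indeterminates, the polynomial ring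
`R[{x_α}]` (realized as the monoid algebra of `σ →₀ ℕ` over `R`) is right
Central McCoy iff `R` is. -/
theorem mvPolynomial_isRightCentralMcCoy_iff (R : Type*) [Ring R] (σ : Type*) :
    IsRightCentralMcCoy (AddMonoidAlgebra R (σ →₀ ℕ)) ↔
      IsRightCentralMcCoy R := by
  constructor
  · -- easy direction: S right Central McCoy → R right Central McCoy
    intro hS f g hf hg hfg
    classical
    set ι : R →+* AddMonoidAlgebra R (σ →₀ ℕ) := AddMonoidAlgebra.singleZeroRingHom with hι
    have hιinj : Function.Injective ι := fun x y h => by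
      have : (AddMonoidAlgebra.single (0 : σ →₀ ℕ) x : AddMonoidAlgebra R (σ →₀ ℕ))
          = AddMonoidAlgebra.single 0 y := h
      exact AddMonoidAlgebra.single_right_injective this
    have hF0 : f.map ι ≠ 0 := fun h => hf (Polynomial.map_injective ι hιinj (by
      rw [h, Polynomial.map_zero]))
    have hG0 : g.map ι ≠ 0 := fun h => hg (Polynomial.map_injective ι hιinj (by
      rw [h, Polynomial.map_zero]))
    have hFG : f.map ι * g.map ι = 0 := by
      rw [← Polynomial.map_mul, hfg, Polynomial.map_zero]
    obtain ⟨c, hc0, hcc⟩ := hS (f.map ι) (g.map ι) hF0 hG0 hFG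
    obtain ⟨a, ha⟩ := Finsupp.support_nonempty_iff.mpr (AddMonoidAlgebra.coeff_eq_zero.not.mpr hc0)
    refine ⟨c.coeff a, Finsupp.mem_support_iff.mp ha, ?_⟩
    intro i
    refine ring_mem_center_iff.mpr fun s => ?_
    have h1 := ring_mem_center_iff.mp (hcc i)
      (AddMonoidAlgebra.single 0 s : AddMonoidAlgebra R (σ →₀ ℕ))
    have h2 : (f.map ι).coeff i = AddMonoidAlgebra.single 0 (f.coeff i) := by
      rw [Polynomial.coeff_map]; rfl
    rw [h2] at h1
    have h3 := congrArg (fun z : AddMonoidAlgebra R (σ →₀ ℕ) => z.coeff a) h1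
    simpa only [AddMonoidAlgebra.coeff_single_zero_mul, AddMonoidAlgebra.coeff_mul_single_zero,
      mul_assoc] using h3
  · -- hard direction: R right Central McCoy → S right Central McCoy
    intro hR f g hf hg hfg
    classical
    set D : Finset (σ →₀ ℕ) :=
      (f.support.sup fun i => (f.coeff i).coeff.support) ∪
        (g.support.sup fun j => (g.coeff j).coeff.support) with hD
    have hDf : ∀ i : ℕ, (f.coeff i).coeff.support ⊆ D := by
      intro i
      by_cases hi : i ∈ f.support
      · exact fun d hd => Finset.mem_union_left _
          (Finset.le_iff_subset.mp (Finset.le_sup (f := fun i => (f.coeff i).coeff.support) hi) hd)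
      · rw [Polynomial.notMem_support_iff.mp hi]; simp
    have hDg : ∀ j : ℕ, (g.coeff j).coeff.support ⊆ D := by
      intro j
      by_cases hj : j ∈ g.support
      · exact fun d hd => Finset.mem_union_right _
          (Finset.le_iff_subset.mp (Finset.le_sup (f := fun j => (g.coeff j).coeff.support) hj) hd)
      · rw [Polynomial.notMem_support_iff.mp hj]; simp
    obtain ⟨φ, hφ⟩ := exists_addHom_injOn D
    set N : ℕ := D.sup φ + 1 with hNdef
    have hN : ∀ d ∈ D, φ d < N := fun d hd => Nat.lt_succ_of_le (Finset.le_sup hd)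
    set Ψ : AddMonoidAlgebra R (σ →₀ ℕ) →+* Polynomial R :=
      ((Polynomial.toFinsuppIso R).symm : AddMonoidAlgebra R ℕ ≃+* Polynomial R).toRingHom.comp
        (AddMonoidAlgebra.mapDomainRingHom R φ) with hΨdef
    have hΨ : ∀ z : AddMonoidAlgebra R (σ →₀ ℕ), ∀ m : ℕ,
        (Ψ z).coeff m = Finsupp.mapDomain φ z.coeff m := by
      intro z m
      rfl
    have hΨapp : ∀ z : AddMonoidAlgebra R (σ →₀ ℕ), z.coeff.support ⊆ D → ∀ d ∈ D,
        (Ψ z).coeff (φ d) = z.coeff d := by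
      intro z hz d hd
      rw [hΨ]
      exact Finsupp.mapDomain_apply' (D : Set (σ →₀ ℕ)) z.coeff
        (Finset.coe_subset.mpr hz) hφ (Finset.mem_coe.mpr hd)
    have hΨdeg : ∀ z : AddMonoidAlgebra R (σ →₀ ℕ), z.coeff.support ⊆ D →
        ∀ m, N ≤ m → (Ψ z).coeff m = 0 := by
      intro z hz m hm
      rw [hΨ]
      by_contra h
      have hm' : m ∈ (Finsupp.mapDomain φ z.coeff).support := Finsupp.mem_support_iff.mpr h
      obtain ⟨d, hd, rfl⟩ := Finset.mem_image.mp (Finsupp.mapDomain_support hm')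
      exact absurd (hN d (hz hd)) (by omega)
    set Θ : Polynomial (AddMonoidAlgebra R (σ →₀ ℕ)) →+* Polynomial R :=
      Polynomial.eval₂RingHom' Ψ (Polynomial.X ^ N)
        (fun z => ((Polynomial.commute_X (Ψ z)).symm).pow_right N) with hΘdef
    have key : ∀ p : Polynomial (AddMonoidAlgebra R (σ →₀ ℕ)),
        (∀ i, (p.coeff i).coeff.support ⊆ D) →
        ∀ i m, m < N → (Θ p).coeff (N * i + m) = (Ψ (p.coeff i)).coeff m := by
      intro p hp i m hm
      have hsum : Θ p = ∑ j ∈ p.support, Ψ (p.coeff j) * Polynomial.X ^ (N * j) := by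
        show Polynomial.eval₂ Ψ (Polynomial.X ^ N) p = _
        rw [Polynomial.eval₂_eq_sum, Polynomial.sum_def]
        exact Finset.sum_congr rfl fun j _ => by rw [← pow_mul]
      rw [hsum, Polynomial.finset_sum_coeff]
      have hterm : ∀ j, j ≠ i →
          (Ψ (p.coeff j) * Polynomial.X ^ (N * j)).coeff (N * i + m) = 0 := by
        intro j hji
        rw [Polynomial.coeff_mul_X_pow']
        rcases lt_or_gt_of_ne hji with h | h
        · have hle : N * j + N ≤ N * i := by
            calc N * j + N = N * (j + 1) := by ring
              _ ≤ N * i := Nat.mul_le_mul_left N h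
          rw [if_pos (by omega)]
          exact hΨdeg _ (hp j) _ (by omega)
        · have hle : N * i + N ≤ N * j := by
            calc N * i + N = N * (i + 1) := by ring
              _ ≤ N * j := Nat.mul_le_mul_left N h
          rw [if_neg (by omega)]
      by_cases hip : i ∈ p.support
      · rw [Finset.sum_eq_single i (fun j _ hji => hterm j hji) (fun h => absurd hip h)]
        rw [Polynomial.coeff_mul_X_pow', if_pos (Nat.le_add_right _ _),
          Nat.add_sub_cancel_left]
      · have h0 : p.coeff i = 0 := Polynomial.notMem_support_iff.mp hip
        rw [h0, map_zero, Polynomial.coeff_zero]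
        exact Finset.sum_eq_zero fun j hj => hterm j (fun h => hip (h ▸ hj))
    have hne : ∀ p : Polynomial (AddMonoidAlgebra R (σ →₀ ℕ)),
        (∀ i, (p.coeff i).coeff.support ⊆ D) → p ≠ 0 → Θ p ≠ 0 := by
      intro p hp hp0 h
      obtain ⟨i, hi⟩ : ∃ i, p.coeff i ≠ 0 := by
        by_contra hcon; push_neg at hcon
        exact hp0 (Polynomial.ext fun n => by rw [hcon n, Polynomial.coeff_zero])
      obtain ⟨d, hd⟩ := Finsupp.support_nonempty_iff.mpr (AddMonoidAlgebra.coeff_eq_zero.not.mpr hi)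
      have hdD : d ∈ D := hp i hd
      have hk := key p hp i (φ d) (hN d hdD)
      rw [h, Polynomial.coeff_zero, hΨapp _ (hp i) d hdD] at hk
      exact Finsupp.mem_support_iff.mp hd hk.symm
    have hFG : Θ f * Θ g = 0 := by rw [← map_mul, hfg, map_zero]
    obtain ⟨r, hr0, hrc⟩ := hR (Θ f) (Θ g) (hne f hDf hf) (hne g hDg hg) hFG
    refine ⟨AddMonoidAlgebra.single 0 r, fun h => hr0 (AddMonoidAlgebra.single_eq_zero.mp h), ?_⟩
    intro i
    apply mem_center_of_coeffs_center
    intro d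
    rw [AddMonoidAlgebra.coeff_mul_single_zero]
    by_cases hd : d ∈ (f.coeff i).coeff.support
    · have hdD := hDf i hd
      have hcast : (f.coeff i).coeff d = (Θ f).coeff (N * i + φ d) := by
        rw [key f hDf i (φ d) (hN d hdD), hΨapp _ (hDf i) d hdD]
      rw [hcast]
      exact hrc _
    · rw [Finsupp.notMem_support_iff.mp hd, zero_mul]
      exact Set.zero_mem_center
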